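/- Let n be a discrete m-function, let α, a > 0 and β ∈ ℝ, and suppose g is a discrete m-function such that a² · n(z) · (β − z − α² g(z)) = α² for all z ∈ ℂ₊ (equivalently, g = 1/(α² M̃) on ℂ₊ where M̃(z) = (β − z − α²/(a² n(z)))⁻¹). Then α = a. -/

import Mathlib

open MeasureTheory Polynomial Filter

noncomputable section

/-- A discrete m-function: the Cauchy transform of a compactly supported
probability measure on `ℝ`, viewed as a function on the upper half plane
`ℂ₊ = {z : 0 < z.im}`. -/
def IsDiscreteMFunction (m : ℂ → ℂ) : Prop :=
  ∃ ρ : Measure ℝ, IsProbabilityMeasure ρ ∧ (∃ t : ℝ, ρ (Set.Icc (-t) t) = 1) ∧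
    ∀ z : ℂ, 0 < z.im → m z = ∫ x : ℝ, ((x : ℂ) - z)⁻¹ ∂ρ

/-- `m` has continued fraction (Jacobi) coefficients `{(a n, b n)}_{n ≥ 1}`
(sequences indexed from 1; index 0 unused) with stripping sequence `ms`. -/
def HasJacobiCoeffs (m : ℂ → ℂ) (a b : ℕ → ℝ) (ms : ℕ → ℂ → ℂ) : Prop :=
  ms 0 = m ∧ (∀ n, IsDiscreteMFunction (ms n)) ∧
    ∀ n, ∀ z : ℂ, 0 < z.im →
      ms n z = ((b (n + 1) : ℂ) - z - (a (n + 1) : ℂ) ^ 2 * ms (n + 1) z)⁻¹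

/-- Shifted first-kind polynomials: `pShift a b (j+1) = p_j(·; {a_i, b_i}_{i=1}^j)`,
so `pShift a b 0 = p₋₁ = 0`, `pShift a b 1 = p₀ = 1`, and the recurrence
`z p_j = a_{j+1} p_{j+1} + b_{j+1} p_j + a_j p_{j-1}` holds. -/
def pShift (a b : ℕ → ℝ) : ℕ → ℂ → ℂ
  | 0 => fun _ => 0
  | 1 => fun _ => 1
  | (n + 2) => fun z =>
      ((z - (b (n + 1) : ℂ)) * pShift a b (n + 1) z - (a n : ℂ) * pShift a b n z) /
        (a (n + 1) : ℂ)

/-- The first-kind polynomial `p_n(z; {a_j, b_j}_{j=1}^n)`. -/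
def firstKind (a b : ℕ → ℝ) (n : ℕ) : ℂ → ℂ := pShift a b (n + 1)

/-- The second-kind polynomial `q_n(z; {a_j, b_j}_{j=1}^n) = a₁⁻¹ p_{n-1}(z; {a_j, b_j}_{j=2}^n)`,
with `q₀ = 0`. -/
def secondKind (a b : ℕ → ℝ) (n : ℕ) : ℂ → ℂ :=
  fun z => ((a 1 : ℂ))⁻¹ * pShift (fun j => a (j + 1)) (fun j => b (j + 1)) n z

/-- The conjugated transfer matrix `T_n = [[p_n, q_n], [-a_n p_{n-1}, -a_n q_{n-1}]]`
of the parameters `(a_j, b_j)_{j=1}^n`. -/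
def ctm (a b : ℕ → ℝ) (n : ℕ) : Matrix (Fin 2) (Fin 2) (ℂ → ℂ) :=
  !![firstKind a b n, secondKind a b n;
     (fun z => -(a n : ℂ) * firstKind a b (n - 1) z),
     (fun z => -(a n : ℂ) * secondKind a b (n - 1) z)]

/-- The finite string `(s (start+1), …, s (start+len))` is a palindrome. -/
def PalSeg {α : Type*} (s : ℕ → α) (start len : ℕ) : Prop :=
  ∀ i, 1 ≤ i → i ≤ len → s (start + i) = s (start + (len + 1 - i))

/-- The pair of `p`-periodic sequences `(a, b)` is doubly palindromic with period `p`
and first length `ℓ` (`1 ≤ ℓ ≤ p - 2`): `(a₁,…,a_ℓ)` and `(a_{ℓ+1},…,a_p)` are palindromes,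
and `(b₁,…,b_{ℓ+1})` and `(b_{ℓ+2},…,b_p)` are palindromes. -/
def DoublyPalindromic (a b : ℕ → ℝ) (p ℓ : ℕ) : Prop :=
  1 ≤ ℓ ∧ ℓ + 2 ≤ p ∧
    PalSeg a 0 ℓ ∧ PalSeg a ℓ (p - ℓ) ∧
    PalSeg b 0 (ℓ + 1) ∧ PalSeg b (ℓ + 1) (p - (ℓ + 1))


private lemma inv_yI_tendsto : Tendsto (fun y : ℝ => ((y : ℂ) * Complex.I)⁻¹) atTop (nhds 0) := by
  rw [tendsto_zero_iff_norm_tendsto_zero]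
  have h : ∀ᶠ y : ℝ in atTop, ‖((y : ℂ) * Complex.I)⁻¹‖ = y⁻¹ := by
    filter_upwards [eventually_gt_atTop (0:ℝ)] with y hy
    simp [norm_inv, abs_of_pos hy]
  rw [tendsto_congr' h]
  exact tendsto_inv_atTop_zero

private lemma mfun_tendsto (m : ℂ → ℂ) (hm : IsDiscreteMFunction m) :
    Tendsto (fun y : ℝ => (y : ℂ) * Complex.I * m ((y : ℂ) * Complex.I)) atTop (nhds (-1)) := by
  obtain ⟨ρ, hρ, -, hrep⟩ := hm
  have heq : ∀ᶠ y : ℝ in atTop, (y : ℂ) * Complex.I * m ((y : ℂ) * Complex.I)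
      = ∫ x : ℝ, (y : ℂ) * Complex.I * (((x : ℂ) - (y : ℂ) * Complex.I)⁻¹) ∂ρ := by
    filter_upwards [eventually_gt_atTop (0:ℝ)] with y hy
    rw [hrep _ (by simp [hy]), ← integral_const_mul]
  rw [tendsto_congr' heq]
  have hint : (-1 : ℂ) = ∫ _ : ℝ, (-1 : ℂ) ∂ρ := by simp
  rw [hint]
  apply tendsto_integral_filter_of_dominated_convergence (fun _ => 1)
  · filter_upwards [eventually_gt_atTop (0:ℝ)] with y hy
    have hne : ∀ x : ℝ, (x : ℂ) - (y : ℂ) * Complex.I ≠ 0 := by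
      intro x h
      have := congrArg Complex.im h
      simp at this
      linarith
    exact (continuous_const.mul
      ((Complex.continuous_ofReal.sub continuous_const).inv₀ hne)).aestronglyMeasurable
  · filter_upwards [eventually_gt_atTop (0:ℝ)] with y hy
    refine Filter.Eventually.of_forall fun x => ?_
    have him : |((x : ℂ) - (y : ℂ) * Complex.I).im| = y := by
      simp [abs_of_pos hy]
    have hle : y ≤ ‖(x : ℂ) - (y : ℂ) * Complex.I‖ := by
      have := Complex.abs_im_le_norm ((x : ℂ) - (y : ℂ) * Complex.I)
      rw [him] at this
      exact this
    have hpos : 0 < ‖(x : ℂ) - (y : ℂ) * Complex.I‖ := lt_of_lt_of_le hy hle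
    rw [norm_mul, norm_inv]
    have : ‖(y : ℂ) * Complex.I‖ = y := by simp [abs_of_pos hy]
    rw [this]
    rw [mul_inv_le_iff₀ hpos, one_mul]
    exact hle
  · exact integrable_const 1
  · refine Filter.Eventually.of_forall fun x => ?_
    have hcong : ∀ᶠ y : ℝ in atTop, (y : ℂ) * Complex.I * (((x : ℂ) - (y : ℂ) * Complex.I)⁻¹)
        = ((x : ℂ) * ((y : ℂ) * Complex.I)⁻¹ - 1)⁻¹ := by
      filter_upwards [eventually_gt_atTop (0:ℝ)] with y hy
      have hw : (y : ℂ) * Complex.I ≠ 0 := by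
        simp [Complex.ext_iff, hy.ne']
      have hxy : (x : ℂ) - (y : ℂ) * Complex.I ≠ 0 := by
        intro h
        have := congrArg Complex.im h
        simp at this
        linarith
      have hy0 : (y : ℂ) ≠ 0 := by exact_mod_cast hy.ne'
      field_simp
    rw [tendsto_congr' hcong]
    have h1 : Tendsto (fun y : ℝ => (x : ℂ) * ((y : ℂ) * Complex.I)⁻¹ - 1) atTop
        (nhds ((x : ℂ) * 0 - 1)) :=
      (tendsto_const_nhds.mul inv_yI_tendsto).sub tendsto_const_nhds
    rw [mul_zero] at h1
    have h2 := h1.inv₀ (by norm_num)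
    have h3 : ((0:ℂ) - 1)⁻¹ = -1 := by norm_num
    rw [h3] at h2
    exact h2

/-- If `n` and `g` are discrete m-functions and `a² n(z) (β - z - α² g(z)) = α²` on `ℂ₊`
(i.e. `g = 1/(α² M̃)` where `M̃(z) = (β - z - α²/(a² n(z)))⁻¹`), then `α = a`. -/
theorem alpha_eq_a
    (n g : ℂ → ℂ) (α a β : ℝ) (hα : 0 < α) (ha : 0 < a)
    (hn : IsDiscreteMFunction n) (hg : IsDiscreteMFunction g)
    (heq : ∀ z : ℂ, 0 < z.im →
      (a : ℂ) ^ 2 * n z * ((β : ℂ) - z - (α : ℂ) ^ 2 * g z) = (α : ℂ) ^ 2) :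
    α = a := by
  have tn := mfun_tendsto n hn
  have tg := mfun_tendsto g hg
  set F : ℝ → ℂ := fun y =>
    (a : ℂ) ^ 2 * ((((y : ℂ) * Complex.I)⁻¹ * ((y : ℂ) * Complex.I * n ((y : ℂ) * Complex.I))) * β
      - ((y : ℂ) * Complex.I * n ((y : ℂ) * Complex.I))
      - (α : ℂ) ^ 2 * (((y : ℂ) * Complex.I * n ((y : ℂ) * Complex.I))
          * ((y : ℂ) * Complex.I * g ((y : ℂ) * Complex.I))
          * (((y : ℂ) * Complex.I)⁻¹ * ((y : ℂ) * Complex.I)⁻¹))) with hF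
  have hFconst : ∀ᶠ y : ℝ in atTop, F y = (α : ℂ) ^ 2 := by
    filter_upwards [eventually_gt_atTop (0:ℝ)] with y hy
    have hw : (y : ℂ) * Complex.I ≠ 0 := by simp [Complex.ext_iff, hy.ne']
    have := heq ((y : ℂ) * Complex.I) (by simp [hy])
    rw [← this, hF]
    have hy0 : (y : ℂ) ≠ 0 := by exact_mod_cast hy.ne'
    field_simp
  have hlim1 : Tendsto F atTop (nhds ((α : ℂ) ^ 2)) := by
    rw [tendsto_congr' hFconst]; exact tendsto_const_nhds
  have hlim2 : Tendsto F atTop (nhds ((a : ℂ) ^ 2 *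
      ((0 * (-1)) * β - (-1) - (α : ℂ) ^ 2 * ((-1) * (-1) * (0 * 0))))) := by
    exact tendsto_const_nhds.mul
      ((((inv_yI_tendsto.mul tn).mul tendsto_const_nhds).sub tn).sub
        (tendsto_const_nhds.mul ((tn.mul tg).mul (inv_yI_tendsto.mul inv_yI_tendsto))))
  have hval : (a : ℂ) ^ 2 * ((0 * (-1)) * β - (-1) - (α : ℂ) ^ 2 * ((-1) * (-1) * (0 * 0)))
      = (a : ℂ) ^ 2 := by ring
  rw [hval] at hlim2
  have hca : (α : ℂ) ^ 2 = (a : ℂ) ^ 2 := tendsto_nhds_unique hlim1 hlim2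
  have hra : α ^ 2 = a ^ 2 := by exact_mod_cast hca
  nlinarith
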